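/- Let S ⊆ ℕ_0^d be an almost symmetric GNS and n ∈ S with n ≠ 0. Then Maximals_{≤_S} Ap(S,n) = Maximals_{≤_S} C(S,n). -/

import Mathlib

open scoped BigOperators

/-- A generalized numerical semigroup: a submonoid of `ℕ^d` with finite complement. -/
def IsGNS {d : ℕ} (S : Set (Fin d → ℕ)) : Prop :=
  (0 : Fin d → ℕ) ∈ S ∧ (∀ x y : Fin d → ℕ, x ∈ S → y ∈ S → x + y ∈ S) ∧ Sᶜ.Finite

/-- The genus: number of gaps. -/
noncomputable def genus {d : ℕ} (S : Set (Fin d → ℕ)) : ℕ := Sᶜ.ncard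

/-- Pseudo-Frobenius elements. -/
def PF {d : ℕ} (S : Set (Fin d → ℕ)) : Set (Fin d → ℕ) :=
  {h | h ∉ S ∧ ∀ s ∈ S, s ≠ 0 → h + s ∈ S}

/-- The type: number of pseudo-Frobenius elements. -/
noncomputable def typ {d : ℕ} (S : Set (Fin d → ℕ)) : ℕ := (PF S).ncard

/-- Maximal elements of a set with respect to a relation. -/
def Maximals {α : Type*} (le : α → α → Prop) (X : Set α) : Set α :=
  {x ∈ X | ∀ y ∈ X, le x y → x = y}

/-- `f` is the unique maximal element of the set of gaps w.r.t. the componentwise order. -/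
def IsFrobenius {d : ℕ} (S : Set (Fin d → ℕ)) (f : Fin d → ℕ) : Prop :=
  Maximals (· ≤ ·) Sᶜ = {f}

/-- Almost symmetric: `2 g(S) + 1 - t(S) = ∏ (h i + 1)` for some gap `h`. -/
def AlmostSymmetric {d : ℕ} (S : Set (Fin d → ℕ)) : Prop :=
  ∃ h ∉ S, 2 * genus S + 1 = typ S + ∏ i, (h i + 1)

/-- Special gaps. -/
def SG {d : ℕ} (S : Set (Fin d → ℕ)) : Set (Fin d → ℕ) :=
  {h ∈ PF S | h + h ∈ S}

/-- The partial order `≤_S` : `y ≤_S x` iff `x - y ∈ S`. -/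
def leS {d : ℕ} (S : Set (Fin d → ℕ)) (x y : Fin d → ℕ) : Prop :=
  ∃ s ∈ S, x + s = y

/-- The Apéry set of `S` with respect to `n`. -/
def Ap {d : ℕ} (S : Set (Fin d → ℕ)) (n : Fin d → ℕ) : Set (Fin d → ℕ) :=
  {s ∈ S | ¬ ∃ u ∈ S, u + n = s}

/-- The reduced Apéry set of `S` with respect to `n`. -/
def Cred {d : ℕ} (S : Set (Fin d → ℕ)) (n : Fin d → ℕ) : Set (Fin d → ℕ) :=
  {s ∈ Ap S n | ∃ h, h ∉ S ∧ s ≤ h + n}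

/-- A monomial order on `ℕ^d` given by its strict-order relation. -/
def IsMonomialOrder (d : ℕ) (lt : (Fin d → ℕ) → (Fin d → ℕ) → Prop) : Prop :=
  (∀ a, ¬ lt a a) ∧ (∀ a b c, lt a b → lt b c → lt a c) ∧
  (∀ a b, a ≠ b → lt a b ∨ lt b a) ∧
  (∀ u a b, lt a b → lt (a + u) (b + u)) ∧
  (∀ a, a ≠ (0 : Fin d → ℕ) → lt 0 a)

/-- Minimal generator of a GNS. -/
def IsMinGen {d : ℕ} (S : Set (Fin d → ℕ)) (x : Fin d → ℕ) : Prop :=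
  x ∈ S ∧ x ≠ 0 ∧ ∀ y ∈ S, ∀ z ∈ S, y ≠ 0 → z ≠ 0 → y + z ≠ x

/-- Irreducible GNS: not an intersection of two GNSs properly containing it. -/
def GNSIrreducible {d : ℕ} (S : Set (Fin d → ℕ)) : Prop :=
  ¬ ∃ S₁ S₂ : Set (Fin d → ℕ), IsGNS S₁ ∧ IsGNS S₂ ∧ S ⊂ S₁ ∧ S ⊂ S₂ ∧ S = S₁ ∩ S₂

/-- Pseudo-symmetric: `PF S = {f, f/2}`. -/
def PseudoSymmetric {d : ℕ} (S : Set (Fin d → ℕ)) : Prop :=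
  ∃ f q : Fin d → ℕ, f ≠ q ∧ q + q = f ∧ PF S = {f, q}

lemma gns_key {d : ℕ} {S : Set (Fin d → ℕ)} (hS : IsGNS S) (hAS : AlmostSymmetric S) :
    ∃ h : Fin d → ℕ, h ∈ PF S ∧ (∀ g, g ∉ S → g ≤ h) ∧
      (∀ g, g ∉ S → h - g ∉ S → g ∈ PF S) := by
  obtain ⟨h, hh, heq⟩ := hAS
  have hGfin : Sᶜ.Finite := hS.2.2
  set B : Set (Fin d → ℕ) := Set.Iic h with hBdef
  have hBfin : B.Finite := Set.finite_Iic h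
  have hBcard : B.ncard = ∏ i, (h i + 1) := by
    rw [hBdef, ← Finset.coe_Iic, Set.ncard_coe_finset, Pi.card_Iic]
    simp [Nat.card_Iic]
  set SB : Set (Fin d → ℕ) := S ∩ B with hSBdef
  set Gh : Set (Fin d → ℕ) := Sᶜ ∩ B with hGhdef
  set G' : Set (Fin d → ℕ) := Sᶜ \ B with hG'def
  set M : Set (Fin d → ℕ) := {x | x ∉ S ∧ x ≤ h ∧ h - x ∉ S} with hMdef
  have hSBfin : SB.Finite := hBfin.subset Set.inter_subset_right
  have hGhfin : Gh.Finite := hBfin.subset Set.inter_subset_right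
  have hG'fin : G'.Finite := hGfin.subset (Set.diff_subset)
  have hMsubGh : M ⊆ Gh := fun x hx => ⟨hx.1, hx.2.1⟩
  have hMfin : M.Finite := hGhfin.subset hMsubGh
  -- genus = |Gh| + |G'|
  have e1 : Sᶜ.ncard = Gh.ncard + G'.ncard := by
    rw [← Set.ncard_union_eq (Set.disjoint_of_subset_left Set.inter_subset_right
      Set.disjoint_sdiff_right) hGhfin hG'fin, Set.inter_union_diff]
  -- |B| = |SB| + |Gh|
  have e2 : B.ncard = SB.ncard + Gh.ncard := by
    have : SB ∪ Gh = B := by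
      rw [hSBdef, hGhdef, ← Set.union_inter_distrib_right, Set.union_compl_self,
        Set.univ_inter]
    rw [← this, Set.ncard_union_eq ?_ hSBfin hGhfin]
    exact Set.disjoint_of_subset Set.inter_subset_left Set.inter_subset_left
      (disjoint_compl_right)
  -- |Gh| = |SB| + |M|
  have sub_mem : ∀ x : Fin d → ℕ, x ≤ h → h - x ≤ h := by
    intro x hx i
    exact Nat.sub_le _ _
  have sub_sub : ∀ x : Fin d → ℕ, x ≤ h → h - (h - x) = x := by
    intro x hx
    funext i
    exact Nat.sub_sub_self (hx i)
  have add_sub : ∀ x : Fin d → ℕ, x ≤ h → x + (h - x) = h := by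
    intro x hx
    funext i
    simpa using Nat.add_sub_cancel' (hx i)
  have e3 : Gh.ncard = SB.ncard + M.ncard := by
    set I : Set (Fin d → ℕ) := (fun x => h - x) '' SB with hIdef
    have hIGh : Gh = I ∪ M := by
      ext x
      constructor
      · rintro ⟨hxS, hxB⟩
        by_cases hhx : h - x ∈ S
        · exact Or.inl ⟨h - x, ⟨hhx, sub_mem x hxB⟩, sub_sub x hxB⟩
        · exact Or.inr ⟨hxS, hxB, hhx⟩
      · rintro (⟨y, ⟨hyS, hyB⟩, rfl⟩ | hxM)
        · refine ⟨fun hc => hh ?_, sub_mem y hyB⟩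
          rw [← add_sub y hyB]
          exact hS.2.1 _ _ hyS hc
        · exact hMsubGh hxM
    have hdisj : Disjoint I M := by
      rw [Set.disjoint_left]
      rintro x ⟨y, ⟨hyS, hyB⟩, rfl⟩ hxM
      exact hxM.2.2 (by rw [sub_sub y hyB]; exact hyS)
    have hIcard : I.ncard = SB.ncard := by
      apply Set.ncard_image_of_injOn
      intro a ha b hb hab
      have hab' : h - a = h - b := hab
      rw [← sub_sub a ha.2, hab', sub_sub b hb.2]
    rw [hIGh, Set.ncard_union_eq hdisj (hSBfin.image _) hMfin, hIcard]
  -- PF ⊆ insert h (M ∪ G')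
  have hPFsub : PF S ⊆ insert h (M ∪ G') := by
    intro f hf
    by_cases hfh : f = h
    · exact Or.inl hfh
    right
    by_cases hfB : f ∈ B
    · left
      refine ⟨hf.1, hfB, fun hc => ?_⟩
      have hne : h - f ≠ 0 := by
        intro h0
        apply hfh
        have := add_sub f hfB
        rw [h0, add_zero] at this
        exact this
      exact hh (by rw [← add_sub f hfB]; exact hf.2 _ hc hne)
    · exact Or.inr ⟨hf.1, hfB⟩
  have hPFfin : (PF S).Finite := hGfin.subset (fun f hf => hf.1)
  have ht_le : typ S ≤ M.ncard + G'.ncard + 1 := by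
    calc typ S ≤ (insert h (M ∪ G')).ncard :=
          Set.ncard_le_ncard hPFsub (((hMfin.union hG'fin).insert h))
      _ ≤ (M ∪ G').ncard + 1 := Set.ncard_insert_le _ _
      _ ≤ M.ncard + G'.ncard + 1 := by
          exact Nat.add_le_add_right (Set.ncard_union_le _ _) 1
  have heq' : 2 * (Gh.ncard + G'.ncard) + 1 = typ S + (SB.ncard + Gh.ncard) := by
    rw [← e1, ← e2, hBcard]; exact heq
  have hG'0 : G'.ncard = 0 := by omega
  have ht : typ S = M.ncard + 1 := by omega
  have hG'empty : G' = ∅ := (Set.ncard_eq_zero hG'fin).mp hG'0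
  have hgapsle : ∀ g, g ∉ S → g ≤ h := by
    intro g hg
    by_contra hc
    have : g ∈ G' := ⟨hg, hc⟩
    rw [hG'empty] at this
    exact this
  -- PF S = insert h M
  have hhM : h ∉ M := by
    intro hc
    apply hc.2.2
    have : h - h = (0 : Fin d → ℕ) := by funext i; simp
    rw [this]; exact hS.1
  have hPFeq : PF S = insert h M := by
    apply Set.eq_of_subset_of_ncard_le
    · intro f hf
      rcases hPFsub hf with h1 | h2 | h3
      · exact Or.inl h1
      · exact Or.inr h2
      · rw [hG'empty] at h3; exact absurd h3 (Set.notMem_empty _)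
    · rw [Set.ncard_insert_of_notMem hhM hMfin]
      unfold typ at ht
      omega
    · exact hMfin.insert h
  refine ⟨h, ?_, hgapsle, ?_⟩
  · rw [hPFeq]; exact Or.inl rfl
  · intro g hg hhg
    rw [hPFeq]
    exact Or.inr ⟨hg, hgapsle g hg, hhg⟩

lemma gns_pf_max {d : ℕ} {S : Set (Fin d → ℕ)} (hS : IsGNS S) {f n : Fin d → ℕ}
    (hf : f ∈ PF S) (hn : n ∈ S) (hn0 : n ≠ 0) :
    f + n ∈ Maximals (leS S) (Ap S n) := by
  have hfnAp : f + n ∈ Ap S n :=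
    ⟨hf.2 n hn hn0, fun ⟨u, hu, hun⟩ => hf.1 ((add_right_cancel hun : u = f) ▸ hu)⟩
  refine ⟨hfnAp, ?_⟩
  rintro y ⟨hyS, hyAp⟩ ⟨s, hs, hfs⟩
  by_cases hs0 : s = 0
  · rw [← hfs, hs0, add_zero]
  · exfalso
    exact hyAp ⟨f + s, hf.2 s hs hs0, by rw [← hfs]; ring⟩

/-- for an almost symmetric GNS,
`Maximals_{≤_S} Ap(S,n) = Maximals_{≤_S} C(S,n)`. -/
theorem statement13 (d : ℕ) (hd : 0 < d) (S : Set (Fin d → ℕ)) (hS : IsGNS S)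
    (hAS : AlmostSymmetric S) (n : Fin d → ℕ) (hn : n ∈ S) (hn0 : n ≠ 0) :
    Maximals (leS S) (Ap S n) = Maximals (leS S) (Cred S n) := by
  obtain ⟨h, hhPF, hle, hM⟩ := gns_key hS hAS
  have hhS : h ∉ S := hhPF.1
  ext x
  constructor
  · rintro ⟨hxAp, hmax⟩
    -- x ≤ h + n
    have hnx : n ≤ x := by
      intro i
      by_contra hlt
      push_neg at hlt
      replace hlt : x i < n i := hlt
      by_cases hj : ∃ j, j ≠ i
      · obtain ⟨j, hji⟩ := hj
        set s : Fin d → ℕ := fun k => if k = j then h j + 1 else 0 with hsdef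
        have hsS : s ∈ S := by
          by_contra hc
          have := hle s hc j
          simp [hsdef] at this
        have hs0 : s ≠ 0 := by
          intro h0
          have := congrFun h0 j
          simp [hsdef] at this
        by_cases hAp : x + s ∈ Ap S n
        · have := hmax (x + s) hAp ⟨s, hsS, rfl⟩
          have : s = 0 := by
            have := congrArg (fun z => z - x) this
            simpa using this.symm
          exact hs0 this
        · have hxsS : x + s ∈ S := hS.2.1 _ _ hxAp.1 hsS
          rw [Ap, Set.mem_setOf_eq] at hAp
          push_neg at hAp
          obtain ⟨u, hu, hun⟩ := hAp hxsS
          have := congrFun hun i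
          simp only [Pi.add_apply] at this
          have hsi : s i = 0 := by simp [hsdef, Ne.symm hji]
          omega
      · push_neg at hj
        set s : Fin d → ℕ := h + n - x with hsdef
        have hsi : s i = h i + n i - x i := rfl
        have hsS : s ∈ S := by
          by_contra hc
          have h2 : h i + n i - x i ≤ h i := hle s hc i
          omega
        have hs0 : s ≠ 0 := by
          intro h0
          have := congrFun h0 i
          rw [hsi] at this
          simp at this
          omega
        have hxs : x + s = h + n := by
          funext k
          have hk : k = i := hj k
          subst hk
          simp only [Pi.add_apply, hsdef, Pi.sub_apply]
          omega
        by_cases hAp : x + s ∈ Ap S n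
        · have heq := hmax (x + s) hAp ⟨s, hsS, rfl⟩
          have : s = 0 := by
            have := congrArg (fun z => z - x) heq
            simpa using this.symm
          exact hs0 this
        · have hxsS : x + s ∈ S := hS.2.1 _ _ hxAp.1 hsS
          rw [Ap, Set.mem_setOf_eq] at hAp
          push_neg at hAp
          obtain ⟨u, hu, hun⟩ := hAp hxsS
          rw [hxs] at hun
          have : u = h := add_right_cancel hun
          exact hhS (this ▸ hu)
    have hxle : x ≤ h + n := by
      have huS : x - n ∉ S := by
        intro hc
        exact hxAp.2 ⟨x - n, hc, funext fun i => by simpa using Nat.sub_add_cancel (hnx i)⟩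
      have := hle _ huS
      intro i
      have h1 := this i
      have h2 := hnx i
      simp only [Pi.sub_apply] at h1
      simp only [Pi.add_apply]
      omega
    have hxCred : x ∈ Cred S n := ⟨hxAp, h, hhS, hxle⟩
    exact ⟨hxCred, fun y hy hxy => hmax y hy.1 hxy⟩
  · rintro ⟨⟨hxAp, h', hh'S, hxle'⟩, hmax⟩
    have hxle : x ≤ h + n := le_trans hxle' (add_le_add_left (hle h' hh'S) n)
    by_cases hwS : h + n - x ∈ S
    · have hw : x + (h + n - x) = h + n := by
        funext i
        have := hxle i
        simp only [Pi.add_apply, Pi.sub_apply] at *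
        omega
      have hhnCred : h + n ∈ Cred S n := by
        refine ⟨⟨hhPF.2 n hn hn0, ?_⟩, h, hhS, le_refl _⟩
        rintro ⟨u, hu, hun⟩
        exact hhS ((add_right_cancel hun : u = h) ▸ hu)
      have := hmax (h + n) hhnCred ⟨h + n - x, hwS, hw⟩
      rw [this]
      exact gns_pf_max hS hhPF hn hn0
    · set w : Fin d → ℕ := h + n - x with hwdef
      have hwh : w ≤ h := hle w hwS
      set v : Fin d → ℕ := h - w with hvdef
      have hvn : v + n = x := by
        funext i
        have h1 := hxle i
        have h2 := hwh i
        simp only [hvdef, hwdef, Pi.add_apply, Pi.sub_apply] at *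
        omega
      have hvS : v ∉ S := by
        intro hc
        exact hxAp.2 ⟨v, hc, hvn⟩
      have hhv : h - v = w := by
        funext i
        have := hwh i
        simp only [hvdef, Pi.sub_apply] at *
        omega
      have hvPF : v ∈ PF S := hM v hvS (by rw [hhv]; exact hwS)
      rw [← hvn]
      exact gns_pf_max hS hvPF hn hn0
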